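/- Let U ⊂ R^n be closed and convex, let B be an open ball, and let g ∈ C¹(B) be such that U ∩ B = {x ∈ B : g(x) ≤ 0}, ∂U ∩ B = {x ∈ B : g(x) = 0}, and ∇g ≠ 0 on B. Let x̄ ∈ ∂U ∩ B, let x_k ∉ U with x_k → x̄, and let p_k = P_U(x_k). Then the cosine of the angle between x_k − p_k and x_{k+1} − p_{k+1} tends to 1; equivalently, (x_k − p_k)/‖x_k − p_k‖ converges to ∇g(x̄)/‖∇g(x̄)‖. -/

import Mathlib

open Metric Filter Topology

/-- `p` is the metric projection of `z` onto `X`. -/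
def IsProj {n : ℕ} (X : Set (EuclideanSpace ℝ (Fin n))) (z p : EuclideanSpace ℝ (Fin n)) : Prop :=
  p ∈ X ∧ ∀ y ∈ X, dist z p ≤ dist z y


noncomputable section

variable {n : ℕ}

/-- Projection onto a convex set satisfies the variational inequality. -/
lemma proj_inner_le {U : Set (EuclideanSpace ℝ (Fin n))} (hU : Convex ℝ U)
    {z pp : EuclideanSpace ℝ (Fin n)} (hpU : pp ∈ U)
    (hmin : ∀ y ∈ U, dist z pp ≤ dist z y) {y : EuclideanSpace ℝ (Fin n)} (hy : y ∈ U) :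
    (inner ℝ (z - pp) (y - pp) : ℝ) ≤ 0 := by
  have key : ∀ t : ℝ, t ∈ Set.Ioc (0:ℝ) 1 →
      2 * (inner ℝ (z - pp) (y - pp) : ℝ) ≤ t * ‖y - pp‖ ^ 2 := by
    intro t ht
    have hq : (1 - t) • pp + t • y ∈ U :=
      hU hpU hy (by linarith [ht.1, ht.2]) (le_of_lt ht.1) (by ring)
    have hd := hmin _ hq
    rw [dist_eq_norm, dist_eq_norm] at hd
    have hrw : z - ((1 - t) • pp + t • y) = (z - pp) - t • (y - pp) := by module
    have h2 : ‖z - pp‖ ^ 2 ≤ ‖(z - pp) - t • (y - pp)‖ ^ 2 := by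
      rw [← hrw]; exact pow_le_pow_left₀ (norm_nonneg _) hd 2
    have h3 : ‖(z - pp) - t • (y - pp)‖ ^ 2
        = ‖z - pp‖ ^ 2 - 2 * (t * (inner ℝ (z - pp) (y - pp) : ℝ)) + (t * ‖y - pp‖) ^ 2 := by
      rw [norm_sub_sq_real, real_inner_smul_right, norm_smul, Real.norm_eq_abs,
        abs_of_pos ht.1]
    rw [h3] at h2
    nlinarith [norm_nonneg (y - pp), ht.1]
  have hten : Tendsto (fun t : ℝ => t * ‖y - pp‖ ^ 2) (𝓝[>] (0:ℝ)) (𝓝 0) := by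
    have : Tendsto (fun t : ℝ => t * ‖y - pp‖ ^ 2) (𝓝 (0:ℝ)) (𝓝 (0 * ‖y - pp‖ ^ 2)) :=
      (continuous_id.mul continuous_const).tendsto 0
    simpa using this.mono_left nhdsWithin_le_nhds
  have h0 : 2 * (inner ℝ (z - pp) (y - pp) : ℝ) ≤ 0 := by
    refine ge_of_tendsto hten ?_
    filter_upwards [Ioc_mem_nhdsGT_of_mem (by norm_num : (0:ℝ) ∈ Set.Ico (0:ℝ) 1)] with t ht
    exact key t ht
  linarith

/-- Characterization of the unit normal direction. -/
lemma unit_normal_eq {G v : EuclideanSpace ℝ (Fin n)} (hG : G ≠ 0) (hv : ‖v‖ = 1)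
    (h : ∀ d : EuclideanSpace ℝ (Fin n), (inner ℝ G d : ℝ) < 0 → (inner ℝ v d : ℝ) ≤ 0) :
    v = ‖G‖⁻¹ • G := by
  have hGn : (0:ℝ) < ‖G‖ := norm_pos_iff.mpr hG
  have h0 : ∀ d : EuclideanSpace ℝ (Fin n), (inner ℝ G d : ℝ) ≤ 0 → (inner ℝ v d : ℝ) ≤ 0 := by
    intro d hd
    have key : ∀ ε : ℝ, 0 < ε → (inner ℝ v d : ℝ) ≤ ε * (inner ℝ v G : ℝ) := by
      intro ε hε
      have h1 : (inner ℝ G (d - ε • G) : ℝ) < 0 := by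
        rw [inner_sub_right, real_inner_smul_right, real_inner_self_eq_norm_sq]
        nlinarith [mul_pos hε (pow_pos hGn 2)]
      have := h _ h1
      rw [inner_sub_right, real_inner_smul_right] at this
      linarith
    have hten : Tendsto (fun ε : ℝ => ε * (inner ℝ v G : ℝ)) (𝓝[>] (0:ℝ)) (𝓝 0) := by
      have : Tendsto (fun ε : ℝ => ε * (inner ℝ v G : ℝ)) (𝓝 (0:ℝ)) (𝓝 (0 * (inner ℝ v G : ℝ))) :=
        (continuous_id.mul continuous_const).tendsto 0
      simpa using this.mono_left nhdsWithin_le_nhds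
    refine ge_of_tendsto hten ?_
    filter_upwards [self_mem_nhdsWithin] with ε hε
    exact key ε hε
  set ν : EuclideanSpace ℝ (Fin n) := ‖G‖⁻¹ • G with hνdef
  have hν1 : ‖ν‖ = 1 := by
    rw [hνdef, norm_smul, Real.norm_eq_abs, abs_of_pos (inv_pos.mpr hGn), inv_mul_cancel₀ hGn.ne']
  have hvν : (inner ℝ v ν : ℝ) = ‖G‖⁻¹ * (inner ℝ v G : ℝ) := real_inner_smul_right v G _
  have hGν : (inner ℝ G ν : ℝ) = ‖G‖ := by
    rw [hνdef, real_inner_smul_right, real_inner_self_eq_norm_sq]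
    field_simp
  have hGv : (inner ℝ G v : ℝ) = ‖G‖ * (inner ℝ v ν : ℝ) := by
    rw [hvν, ← mul_assoc, mul_inv_cancel₀ hGn.ne', one_mul, real_inner_comm]
  have hge0 : (0:ℝ) ≤ inner ℝ v ν := by
    have := h0 (-ν) (by
      rw [inner_neg_right, hGν]; linarith)
    rw [inner_neg_right] at this; linarith
  have hsq : (1:ℝ) ≤ (inner ℝ v ν : ℝ) ^ 2 := by
    have hd : (inner ℝ G (v - (inner ℝ v ν : ℝ) • ν) : ℝ) ≤ 0 := by
      rw [inner_sub_right, real_inner_smul_right, hGν, hGv]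
      linarith [mul_comm ‖G‖ (inner ℝ v ν : ℝ)]
    have := h0 _ hd
    rw [inner_sub_right, real_inner_smul_right, real_inner_self_eq_norm_sq, hv] at this
    nlinarith
  have hle1 : (inner ℝ v ν : ℝ) ≤ 1 := by
    have := real_inner_le_norm v ν
    rw [hv, hν1] at this; linarith
  have heq1 : (inner ℝ v ν : ℝ) = 1 := by nlinarith
  have hz : ‖v - ν‖ ^ 2 = 0 := by
    rw [norm_sub_sq_real, hv, hν1, heq1]; ring
  have := norm_eq_zero.mp (pow_eq_zero_iff (n := 2) (by norm_num) |>.mp hz)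
  rwa [sub_eq_zero] at this

/-- If the gradient direction derivative is negative, we can enter `U`. -/
lemma exists_enter {U : Set (EuclideanSpace ℝ (Fin n))}
    {c : EuclideanSpace ℝ (Fin n)} {r : ℝ}
    {g : EuclideanSpace ℝ (Fin n) → ℝ}
    (hg : ContDiffOn ℝ 1 g (Metric.ball c r))
    (hUB : U ∩ Metric.ball c r = {y ∈ Metric.ball c r | g y ≤ 0})
    {xbar : EuclideanSpace ℝ (Fin n)} (hxb : xbar ∈ Metric.ball c r) (hgx : g xbar = 0)
    {d : EuclideanSpace ℝ (Fin n)} (hd : (inner ℝ (gradient g xbar) d : ℝ) < 0) :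
    ∃ t : ℝ, 0 < t ∧ xbar + t • d ∈ U := by
  have hdiff : DifferentiableAt ℝ g xbar :=
    (hg.differentiableOn one_ne_zero).differentiableAt (Metric.isOpen_ball.mem_nhds hxb)
  have hgrad := hdiff.hasGradientAt
  have hfd : HasFDerivAt g (InnerProductSpace.toDual ℝ _ (gradient g xbar)) xbar :=
    hgrad.hasFDerivAt
  have hline : HasDerivAt (fun t : ℝ => xbar + t • d) d 0 := by
    simpa using ((hasDerivAt_id (0:ℝ)).smul_const d).const_add xbar
  have hphi : HasDerivAt (fun t : ℝ => g (xbar + t • d)) (inner ℝ (gradient g xbar) d : ℝ) 0 := by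
    have hfd' : HasFDerivAt g (InnerProductSpace.toDual ℝ _ (gradient g xbar))
        (xbar + (0:ℝ) • d) := by simpa using hfd
    have := hfd'.comp_hasDerivAt 0 hline
    rw [InnerProductSpace.toDual_apply_apply] at this
    exact this
  have hslope := hasDerivAt_iff_tendsto_slope.mp hphi
  have hneg : ∀ᶠ t in 𝓝[≠] (0:ℝ), slope (fun t : ℝ => g (xbar + t • d)) 0 t < 0 :=
    hslope.eventually (Iio_mem_nhds hd)
  have hmono : 𝓝[>] (0:ℝ) ≤ 𝓝[≠] (0:ℝ) :=
    nhdsWithin_mono 0 (fun t ht => ne_of_gt ht)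
  have hball : ∀ᶠ t in 𝓝[>] (0:ℝ), xbar + t • d ∈ Metric.ball c r := by
    have hcont : Continuous (fun t : ℝ => xbar + t • d) :=
      continuous_const.add (continuous_id.smul continuous_const)
    have : ∀ᶠ t in 𝓝 (0:ℝ), xbar + t • d ∈ Metric.ball c r := by
      have := hcont.tendsto 0
      simp only [zero_smul, add_zero] at this
      exact this.eventually (Metric.isOpen_ball.mem_nhds hxb)
    exact this.filter_mono nhdsWithin_le_nhds
  have := ((hneg.filter_mono hmono).and hball).and self_mem_nhdsWithin
  obtain ⟨t, ⟨hts, htb⟩, htpos⟩ := this.exists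
  refine ⟨t, htpos, ?_⟩
  have hglt : g (xbar + t • d) < 0 := by
    have : slope (fun t : ℝ => g (xbar + t • d)) 0 t
        = g (xbar + t • d) / t := by
      simp [slope_def_field, hgx]
    rw [this] at hts
    have := (div_neg_iff).mp hts
    rcases this with ⟨h1, h2⟩ | ⟨h1, h2⟩
    · linarith [htpos]
    · exact h1
  have : xbar + t • d ∈ U ∩ Metric.ball c r := by
    rw [hUB]; exact ⟨htb, le_of_lt hglt⟩
  exact this.1

end

/-- Alignment of projection directions near a smooth boundary. -/
theorem stmt12 {n : ℕ} (U : Set (EuclideanSpace ℝ (Fin n)))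
    (hUc : IsClosed U) (hUconv : Convex ℝ U)
    (c : EuclideanSpace ℝ (Fin n)) (r : ℝ) (hr : 0 < r)
    (g : EuclideanSpace ℝ (Fin n) → ℝ)
    (hg : ContDiffOn ℝ 1 g (Metric.ball c r))
    (hUB : U ∩ Metric.ball c r = {y ∈ Metric.ball c r | g y ≤ 0})
    (hbd : frontier U ∩ Metric.ball c r = {y ∈ Metric.ball c r | g y = 0})
    (hgrad : ∀ y ∈ Metric.ball c r, gradient g y ≠ 0)
    (xbar : EuclideanSpace ℝ (Fin n))
    (hxbar : xbar ∈ frontier U ∩ Metric.ball c r)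
    (x : ℕ → EuclideanSpace ℝ (Fin n)) (hx : ∀ k, x k ∉ U)
    (hlim : Tendsto x atTop (nhds xbar))
    (p : ℕ → EuclideanSpace ℝ (Fin n)) (hp : ∀ k, IsProj U (x k) (p k)) :
    Tendsto (fun k => ‖x k - p k‖⁻¹ • (x k - p k)) atTop
      (nhds (‖gradient g xbar‖⁻¹ • gradient g xbar)) ∧
    Tendsto (fun k =>
        (inner ℝ (x k - p k) (x (k + 1) - p (k + 1)) : ℝ) /
          (‖x k - p k‖ * ‖x (k + 1) - p (k + 1)‖)) atTop (nhds 1) := by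
  set G := gradient g xbar with hGdef
  have hGne : G ≠ 0 := hgrad xbar hxbar.2
  have hGn : (0:ℝ) < ‖G‖ := norm_pos_iff.mpr hGne
  set ν : EuclideanSpace ℝ (Fin n) := ‖G‖⁻¹ • G with hνdef
  have hν1 : ‖ν‖ = 1 := by
    rw [hνdef, norm_smul, Real.norm_eq_abs, abs_of_pos (inv_pos.mpr hGn), inv_mul_cancel₀ hGn.ne']
  have hxU : xbar ∈ U := by
    have := frontier_subset_closure hxbar.1
    rwa [hUc.closure_eq] at this
  have hgx : g xbar = 0 := by
    have : xbar ∈ {y ∈ Metric.ball c r | g y = 0} := hbd ▸ hxbar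
    exact this.2
  have hxpne : ∀ k, x k - p k ≠ 0 := fun k =>
    sub_ne_zero.mpr (fun h => hx k (h ▸ (hp k).1))
  have hnpos : ∀ k, (0:ℝ) < ‖x k - p k‖ := fun k => norm_pos_iff.mpr (hxpne k)
  set v : ℕ → EuclideanSpace ℝ (Fin n) := fun k => ‖x k - p k‖⁻¹ • (x k - p k) with hvdef
  have hv1 : ∀ k, ‖v k‖ = 1 := fun k => by
    rw [hvdef, norm_smul, Real.norm_eq_abs, abs_of_pos (inv_pos.mpr (hnpos k)),
      inv_mul_cancel₀ (hnpos k).ne']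
  have hplim : Tendsto p atTop (𝓝 xbar) := by
    rw [tendsto_iff_dist_tendsto_zero]
    have hb : ∀ k, dist (p k) xbar ≤ 2 * dist (x k) xbar := by
      intro k
      have h1 : dist (x k) (p k) ≤ dist (x k) xbar := (hp k).2 xbar hxU
      calc dist (p k) xbar ≤ dist (p k) (x k) + dist (x k) xbar := dist_triangle _ _ _
        _ ≤ 2 * dist (x k) xbar := by rw [dist_comm (p k) (x k)]; linarith
    have hx0 : Tendsto (fun k => dist (x k) xbar) atTop (𝓝 0) :=
      tendsto_iff_dist_tendsto_zero.mp hlim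
    have h2 : Tendsto (fun k => 2 * dist (x k) xbar) atTop (𝓝 0) := by
      simpa using hx0.const_mul 2
    exact squeeze_zero (fun k => dist_nonneg) hb h2
  -- main convergence of directions
  have hmain : Tendsto v atTop (𝓝 ν) := by
    apply tendsto_of_subseq_tendsto
    intro ns hns
    have hsphere : ∀ j, v (ns j) ∈ Metric.sphere (0 : EuclideanSpace ℝ (Fin n)) 1 := by
      intro j; simp [hv1]
    obtain ⟨w, hw, ms, hms, hwlim⟩ :=
      (isCompact_sphere (0 : EuclideanSpace ℝ (Fin n)) 1).tendsto_subseq hsphere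
    refine ⟨ms, ?_⟩
    have hwn : ‖w‖ = 1 := by simpa using hw
    have hcomp : Tendsto (fun j => ns (ms j)) atTop atTop :=
      hns.comp hms.tendsto_atTop
    have hpcomp : Tendsto (fun j => p (ns (ms j))) atTop (𝓝 xbar) := hplim.comp hcomp
    -- w satisfies the normal-cone property
    have hnc : ∀ y ∈ U, (inner ℝ w (y - xbar) : ℝ) ≤ 0 := by
      intro y hy
      have hterm : ∀ j, (inner ℝ (v (ns (ms j))) (y - p (ns (ms j))) : ℝ) ≤ 0 := by
        intro j
        set k := ns (ms j)
        have hproj := proj_inner_le hUconv (hp k).1 (hp k).2 hy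
        rw [hvdef]
        rw [real_inner_smul_left]
        exact mul_nonpos_of_nonneg_of_nonpos (inv_nonneg.mpr (norm_nonneg _)) hproj
      have htlim : Tendsto (fun j => (inner ℝ (v (ns (ms j))) (y - p (ns (ms j))) : ℝ)) atTop
          (𝓝 (inner ℝ w (y - xbar) : ℝ)) :=
        hwlim.inner (tendsto_const_nhds.sub hpcomp)
      exact le_of_tendsto htlim (Filter.Eventually.of_forall hterm)
    have hwν : w = ν := by
      apply unit_normal_eq hGne hwn
      intro d hd
      obtain ⟨t, ht, hmem⟩ := exists_enter hg hUB hxbar.2 hgx hd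
      have := hnc _ hmem
      have hsimp : xbar + t • d - xbar = t • d := by abel
      rw [hsimp, real_inner_smul_right] at this
      nlinarith
    rw [← hwν]
    exact hwlim
  refine ⟨hmain, ?_⟩
  -- the cosine claim
  have hrw : ∀ k, (inner ℝ (x k - p k) (x (k + 1) - p (k + 1)) : ℝ) /
      (‖x k - p k‖ * ‖x (k + 1) - p (k + 1)‖) = (inner ℝ (v k) (v (k + 1)) : ℝ) := by
    intro k
    rw [hvdef]
    rw [real_inner_smul_left, real_inner_smul_right]
    field_simp
  have hmain' : Tendsto (fun k => v (k + 1)) atTop (𝓝 ν) :=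
    hmain.comp (tendsto_add_atTop_nat 1)
  have : Tendsto (fun k => (inner ℝ (v k) (v (k + 1)) : ℝ)) atTop (𝓝 (inner ℝ ν ν : ℝ)) :=
    hmain.inner hmain'
  have hνν : (inner ℝ ν ν : ℝ) = 1 := by
    rw [real_inner_self_eq_norm_sq, hν1]; norm_num
  rw [hνν] at this
  exact this.congr (fun k => (hrw k).symm)
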